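/- Let F : ℝ² → ℝ be three times continuously differentiable and satisfy the Monge–Ampère equation F₁₁F₂₂ − F₁₂² = 1, where subscripts denote partial derivatives with respect to x¹ and x². Then the gradient graph (x¹, x², F₁(x¹,x²), F₂(x¹,x²)) in ℝ⁴ satisfies the minimal surface equations: g₂₂ f^k₁₁ + g₁₁ f^k₂₂ − 2 g₁₂ f^k₁₂ = 0 for f¹ = F₁, f² = F₂ and k = 1, 2. (Such gradient graphs are special Lagrangian surfaces of phase π/2 in ℝ⁴ = ℂ² with complex coordinates z = x¹ + iF₁, w = x² + iF₂, and are therefore minimal.) -/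

import Mathlib

noncomputable section

/-- Partial derivative in the first variable. -/
def pd1 (F : ℝ → ℝ → ℝ) (u v : ℝ) : ℝ := deriv (fun x => F x v) u

/-- Partial derivative in the second variable. -/
def pd2 (F : ℝ → ℝ → ℝ) (u v : ℝ) : ℝ := deriv (fun y => F u y) v

/-- The minimal surface equations for the graph `(u, v, F1(u,v), F2(u,v)) ⊂ ℝ⁴`. -/
def MinimalGraphEq (F1 F2 : ℝ → ℝ → ℝ) (u v : ℝ) : Prop :=
  ((1 + (pd2 F1 u v) ^ 2 + (pd2 F2 u v) ^ 2) * pd1 (pd1 F1) u v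
    + (1 + (pd1 F1 u v) ^ 2 + (pd1 F2 u v) ^ 2) * pd2 (pd2 F1) u v
    - 2 * (pd1 F1 u v * pd2 F1 u v + pd1 F2 u v * pd2 F2 u v) * pd1 (pd2 F1) u v = 0) ∧
  ((1 + (pd2 F1 u v) ^ 2 + (pd2 F2 u v) ^ 2) * pd1 (pd1 F2) u v
    + (1 + (pd1 F1 u v) ^ 2 + (pd1 F2 u v) ^ 2) * pd2 (pd2 F2) u v
    - 2 * (pd1 F1 u v * pd2 F1 u v + pd1 F2 u v * pd2 F2 u v) * pd1 (pd2 F2) u v = 0)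

/-- First partial derivative of an uncurried function. -/
def D1' (G : ℝ × ℝ → ℝ) (p : ℝ × ℝ) : ℝ := fderiv ℝ G p (1, 0)

/-- Second partial derivative of an uncurried function. -/
def D2' (G : ℝ × ℝ → ℝ) (p : ℝ × ℝ) : ℝ := fderiv ℝ G p (0, 1)

lemma hasDerivAt_D1' {G : ℝ × ℝ → ℝ} {u v : ℝ} (h : DifferentiableAt ℝ G (u, v)) :
    HasDerivAt (fun x => G (x, v)) (D1' G (u, v)) u := by
  have h2 : HasDerivAt (fun x : ℝ => (x, v)) ((1 : ℝ), (0 : ℝ)) u :=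
    (hasDerivAt_id u).prodMk (hasDerivAt_const u v)
  exact h.hasFDerivAt.comp_hasDerivAt u h2

lemma hasDerivAt_D2' {G : ℝ × ℝ → ℝ} {u v : ℝ} (h : DifferentiableAt ℝ G (u, v)) :
    HasDerivAt (fun y => G (u, y)) (D2' G (u, v)) v := by
  have h2 : HasDerivAt (fun y : ℝ => (u, y)) ((0 : ℝ), (1 : ℝ)) v :=
    (hasDerivAt_const v u).prodMk (hasDerivAt_id v)
  exact h.hasFDerivAt.comp_hasDerivAt v h2

lemma pd1_eqD {G : ℝ × ℝ → ℝ} {F : ℝ → ℝ → ℝ} (hFG : ∀ x y, F x y = G (x, y))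
    (u v : ℝ) (h : DifferentiableAt ℝ G (u, v)) : pd1 F u v = D1' G (u, v) := by
  have := (hasDerivAt_D1' h).deriv
  unfold pd1
  rw [show (fun x => F x v) = (fun x => G (x, v)) from funext fun x => hFG x v]
  exact this

lemma pd2_eqD {G : ℝ × ℝ → ℝ} {F : ℝ → ℝ → ℝ} (hFG : ∀ x y, F x y = G (x, y))
    (u v : ℝ) (h : DifferentiableAt ℝ G (u, v)) : pd2 F u v = D2' G (u, v) := by
  have := (hasDerivAt_D2' h).deriv
  unfold pd2
  rw [show (fun y => F u y) = (fun y => G (u, y)) from funext fun y => hFG u y]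
  exact this

lemma contDiff_D1' {G : ℝ × ℝ → ℝ} {m n : ℕ∞} (h : m + 1 ≤ n) (hG : ContDiff ℝ n G) :
    ContDiff ℝ m (D1' G) := by
  have : ContDiff ℝ m (fderiv ℝ G) := hG.fderiv_right (by exact_mod_cast h)
  exact this.clm_apply contDiff_const

lemma contDiff_D2' {G : ℝ × ℝ → ℝ} {m n : ℕ∞} (h : m + 1 ≤ n) (hG : ContDiff ℝ n G) :
    ContDiff ℝ m (D2' G) := by
  have : ContDiff ℝ m (fderiv ℝ G) := hG.fderiv_right (by exact_mod_cast h)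
  exact this.clm_apply contDiff_const

lemma D_symm {G : ℝ × ℝ → ℝ} (hG : ContDiff ℝ 2 G) (p : ℝ × ℝ) :
    D1' (D2' G) p = D2' (D1' G) p := by
  have hc : DifferentiableAt ℝ (fderiv ℝ G) p := by
    have : ContDiff ℝ 1 (fderiv ℝ G) := hG.fderiv_right (by norm_num)
    exact (this.differentiable one_ne_zero).differentiableAt
  have h12 : fderiv ℝ (fun q => fderiv ℝ G q ((0 : ℝ), (1 : ℝ))) p =
      (fderiv ℝ G p).comp (fderiv ℝ (fun _ : ℝ × ℝ => ((0 : ℝ), (1 : ℝ))) p)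
        + (fderiv ℝ (fderiv ℝ G) p).flip (0, 1) :=
    fderiv_clm_apply hc (differentiableAt_const _)
  have h21 : fderiv ℝ (fun q => fderiv ℝ G q ((1 : ℝ), (0 : ℝ))) p =
      (fderiv ℝ G p).comp (fderiv ℝ (fun _ : ℝ × ℝ => ((1 : ℝ), (0 : ℝ))) p)
        + (fderiv ℝ (fderiv ℝ G) p).flip (1, 0) :=
    fderiv_clm_apply hc (differentiableAt_const _)
  have hsym := (hG.contDiffAt (x := p)).isSymmSndFDerivAt (by norm_num)
  have e1 : D1' (D2' G) p = fderiv ℝ (fderiv ℝ G) p (1, 0) (0, 1) := by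
    show fderiv ℝ (fun q => fderiv ℝ G q ((0 : ℝ), (1 : ℝ))) p (1, 0) = _
    rw [h12]; simp [fderiv_const]
  have e2 : D2' (D1' G) p = fderiv ℝ (fderiv ℝ G) p (0, 1) (1, 0) := by
    show fderiv ℝ (fun q => fderiv ℝ G q ((1 : ℝ), (0 : ℝ))) p (0, 1) = _
    rw [h21]; simp [fderiv_const]
  rw [e1, e2, hsym (1, 0) (0, 1)]

/-- if `F` is C³ and solves the Monge–Ampère equation
`F₁₁F₂₂ − F₁₂² = 1`, then the gradient graph `(x¹, x², F₁, F₂)` (a special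
Lagrangian surface of phase `π/2` in `ℂ²`) satisfies the minimal surface
equations. -/
theorem stmt18 (F : ℝ → ℝ → ℝ)
    (hF : ContDiff ℝ 3 (fun p : ℝ × ℝ => F p.1 p.2))
    (hMA : ∀ x y : ℝ,
      pd1 (pd1 F) x y * pd2 (pd2 F) x y - (pd1 (pd2 F) x y) ^ 2 = 1)
    (x y : ℝ) :
    MinimalGraphEq (pd1 F) (pd2 F) x y := by
  set G : ℝ × ℝ → ℝ := fun p => F p.1 p.2 with hGdef
  -- differentiability levels
  have hG1 : ContDiff ℝ 2 (D1' G) := contDiff_D1' (by norm_num) hF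
  have hG2 : ContDiff ℝ 2 (D2' G) := contDiff_D2' (by norm_num) hF
  have hG11 : ContDiff ℝ 1 (D1' (D1' G)) := contDiff_D1' (by norm_num) hG1
  have hG12 : ContDiff ℝ 1 (D1' (D2' G)) := contDiff_D1' (by norm_num) hG2
  have hG21 : ContDiff ℝ 1 (D2' (D1' G)) := contDiff_D2' (by norm_num) hG1
  have hG22 : ContDiff ℝ 1 (D2' (D2' G)) := contDiff_D2' (by norm_num) hG2
  have dG : ∀ p, DifferentiableAt ℝ G p :=
    fun p => (hF.differentiable (by norm_num)).differentiableAt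
  have dG1 : ∀ p, DifferentiableAt ℝ (D1' G) p :=
    fun p => (hG1.differentiable (by norm_num)).differentiableAt
  have dG2 : ∀ p, DifferentiableAt ℝ (D2' G) p :=
    fun p => (hG2.differentiable (by norm_num)).differentiableAt
  have dG11 : ∀ p, DifferentiableAt ℝ (D1' (D1' G)) p :=
    fun p => (hG11.differentiable one_ne_zero).differentiableAt
  have dG12 : ∀ p, DifferentiableAt ℝ (D1' (D2' G)) p :=
    fun p => (hG12.differentiable one_ne_zero).differentiableAt
  have dG21 : ∀ p, DifferentiableAt ℝ (D2' (D1' G)) p :=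
    fun p => (hG21.differentiable one_ne_zero).differentiableAt
  have dG22 : ∀ p, DifferentiableAt ℝ (D2' (D2' G)) p :=
    fun p => (hG22.differentiable one_ne_zero).differentiableAt
  -- first-order identities
  have e1 : ∀ u v, pd1 F u v = D1' G (u, v) :=
    fun u v => pd1_eqD (fun _ _ => rfl) u v (dG _)
  have e2 : ∀ u v, pd2 F u v = D2' G (u, v) :=
    fun u v => pd2_eqD (fun _ _ => rfl) u v (dG _)
  -- second-order identities
  have e11 : ∀ u v, pd1 (pd1 F) u v = D1' (D1' G) (u, v) :=
    fun u v => pd1_eqD e1 u v (dG1 _)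
  have e12 : ∀ u v, pd1 (pd2 F) u v = D1' (D2' G) (u, v) :=
    fun u v => pd1_eqD e2 u v (dG2 _)
  have e21 : ∀ u v, pd2 (pd1 F) u v = D2' (D1' G) (u, v) :=
    fun u v => pd2_eqD e1 u v (dG1 _)
  have e22 : ∀ u v, pd2 (pd2 F) u v = D2' (D2' G) (u, v) :=
    fun u v => pd2_eqD e2 u v (dG2 _)
  -- symmetry of second derivatives
  have s0 : ∀ p, D1' (D2' G) p = D2' (D1' G) p := D_symm (hF.of_le (by norm_num))
  have s1 : ∀ p, D1' (D2' (D1' G)) p = D2' (D1' (D1' G)) p := D_symm hG1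
  have s2 : ∀ p, D1' (D2' (D2' G)) p = D2' (D1' (D2' G)) p := D_symm hG2
  have s0' : D2' (D1' G) = D1' (D2' G) := funext fun p => (s0 p).symm
  -- third-order identities appearing in the goal
  have t111 : ∀ u v, pd1 (pd1 (pd1 F)) u v = D1' (D1' (D1' G)) (u, v) :=
    fun u v => pd1_eqD e11 u v (dG11 _)
  have t221 : ∀ u v, pd2 (pd2 (pd1 F)) u v = D1' (D2' (D2' G)) (u, v) := by
    intro u v
    have := pd2_eqD e21 u v (dG21 _)
    rw [this, s0', s2]
  have t121 : ∀ u v, pd1 (pd2 (pd1 F)) u v = D1' (D1' (D2' G)) (u, v) := by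
    intro u v
    have := pd1_eqD e21 u v (dG21 _)
    rw [this, s0']
  have t112 : ∀ u v, pd1 (pd1 (pd2 F)) u v = D1' (D1' (D2' G)) (u, v) :=
    fun u v => pd1_eqD e12 u v (dG12 _)
  have t222 : ∀ u v, pd2 (pd2 (pd2 F)) u v = D2' (D2' (D2' G)) (u, v) :=
    fun u v => pd2_eqD e22 u v (dG22 _)
  have t122 : ∀ u v, pd1 (pd2 (pd2 F)) u v = D1' (D2' (D2' G)) (u, v) :=
    fun u v => pd1_eqD e22 u v (dG22 _)
  -- the Monge–Ampère equation in uncurried form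
  have hMA' : ∀ u v : ℝ,
      D1' (D1' G) (u, v) * D2' (D2' G) (u, v) - (D1' (D2' G) (u, v)) ^ 2 = 1 := by
    intro u v
    rw [← e11, ← e22, ← e12]; exact hMA u v
  -- differentiate MA in the x-direction
  have hDx : D1' (D1' (D1' G)) (x, y) * D2' (D2' G) (x, y)
      + D1' (D1' G) (x, y) * D1' (D2' (D2' G)) (x, y)
      - 2 * D1' (D2' G) (x, y) ^ 1 * D1' (D1' (D2' G)) (x, y) = 0 := by
    have hA := hasDerivAt_D1' (u := x) (v := y) (dG11 _)
    have hC := hasDerivAt_D1' (u := x) (v := y) (dG22 _)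
    have hB := hasDerivAt_D1' (u := x) (v := y) (dG12 _)
    have hprod := ((hA.mul hC).sub (hB.pow 2))
    have hfun : (fun t => D1' (D1' G) (t, y) * D2' (D2' G) (t, y)
        - D1' (D2' G) (t, y) ^ 2) = fun _ => (1 : ℝ) :=
      funext fun t => hMA' t y
    change HasDerivAt (fun t => D1' (D1' G) (t, y) * D2' (D2' G) (t, y)
        - D1' (D2' G) (t, y) ^ 2) _ x at hprod
    rw [hfun] at hprod
    have h0 := hprod.unique (hasDerivAt_const x 1)
    push_cast at h0 ⊢
    linarith
  -- differentiate MA in the y-direction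
  have hDy : D2' (D1' (D1' G)) (x, y) * D2' (D2' G) (x, y)
      + D1' (D1' G) (x, y) * D2' (D2' (D2' G)) (x, y)
      - 2 * D1' (D2' G) (x, y) ^ 1 * D2' (D1' (D2' G)) (x, y) = 0 := by
    have hA := hasDerivAt_D2' (u := x) (v := y) (dG11 _)
    have hC := hasDerivAt_D2' (u := x) (v := y) (dG22 _)
    have hB := hasDerivAt_D2' (u := x) (v := y) (dG12 _)
    have hprod := ((hA.mul hC).sub (hB.pow 2))
    have hfun : (fun t => D1' (D1' G) (x, t) * D2' (D2' G) (x, t)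
        - D1' (D2' G) (x, t) ^ 2) = fun _ => (1 : ℝ) :=
      funext fun t => hMA' x t
    change HasDerivAt (fun t => D1' (D1' G) (x, t) * D2' (D2' G) (x, t)
        - D1' (D2' G) (x, t) ^ 2) _ y at hprod
    rw [hfun] at hprod
    have h0 := hprod.unique (hasDerivAt_const y 1)
    push_cast at h0 ⊢
    linarith
  -- abbreviations at the point
  set A := D1' (D1' G) (x, y) with hA
  set B := D1' (D2' G) (x, y) with hB
  set C := D2' (D2' G) (x, y) with hC
  set A1 := D1' (D1' (D1' G)) (x, y) with hA1
  set B1 := D1' (D1' (D2' G)) (x, y) with hB1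
  set C1 := D1' (D2' (D2' G)) (x, y) with hC1
  set C2 := D2' (D2' (D2' G)) (x, y) with hC2
  have hA2 : D2' (D1' (D1' G)) (x, y) = B1 := by rw [← s1, s0']
  have hB2 : D2' (D1' (D2' G)) (x, y) = C1 := by rw [← s2 (x, y)]
  rw [hA2, hB2] at hDy
  have hMApt : A * C - B ^ 2 = 1 := hMA' x y
  simp only [pow_one] at hDx hDy
  constructor
  · rw [t111, t221, t121, e11, e21, e12, e22, ← s0 (x, y),
      ← hA, ← hB, ← hC, ← hA1, ← hB1, ← hC1]
    linear_combination (A + C) * hDx - (A1 + C1) * hMApt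
  · rw [t112, t222, t122, e11, e21, e12, e22, ← s0 (x, y),
      ← hA, ← hB, ← hC, ← hB1, ← hC1, ← hC2]
    linear_combination (A + C) * hDy - (B1 + C2) * hMApt
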